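/- Suppose λ ∈ Λ and let x* ∈ F be the unique free-flow equilibrium point. Let δ̄ = inf{‖x − x*‖₁ : x ∈ X \ F} > 0. Then x* is (locally) asymptotically stable, and the open ball B_δ̄(x*) = {x ∈ X : ‖x − x*‖₁ < δ̄} is contained in the region of attraction of x*: every solution of the non-FIFO dynamics with initial condition in B_δ̄(x*) converges to x* as t → ∞. -/

import Mathlib

open Matrix Finset

section MTN

variable {E K : Type*} [Fintype E] [Fintype K] [DecidableEq E]

/-- Total demand of flow directed into cell `j` (the denominator in the non-FIFO rule). -/
noncomputable def inflowDemand (d : E → K → ℝ → ℝ) (R : K → Matrix E E ℝ)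
    (x : E → K → ℝ) (j : E) : ℝ :=
  ∑ l, ∑ h, R h l j * d l h (x l h)

/-- The non-FIFO scaling factor `min {1, s_j(Σ_h x_j^h) / inflowDemand j}`,
taken equal to `1` when the denominator vanishes. -/
noncomputable def flowScale (d : E → K → ℝ → ℝ) (s : E → ℝ → ℝ)
    (R : K → Matrix E E ℝ) (x : E → K → ℝ) (j : E) : ℝ :=
  if inflowDemand d R x j = 0 then 1
  else min 1 (s j (∑ h, x j h) / inflowDemand d R x j)

/-- The non-FIFO inter-cell flow `f_ij^k(x)`. -/
noncomputable def interFlow (d : E → K → ℝ → ℝ) (s : E → ℝ → ℝ)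
    (R : K → Matrix E E ℝ) (x : E → K → ℝ) (i j : E) (k : K) : ℝ :=
  R k i j * d i k (x i k) * flowScale d s R x j

/-- Total outflow `z_i^k(x)` of commodity `k` from cell `i`. -/
noncomputable def outFlow (S : Finset E) (d : E → K → ℝ → ℝ) (s : E → ℝ → ℝ)
    (R : K → Matrix E E ℝ) (x : E → K → ℝ) (i : E) (k : K) : ℝ :=
  if i ∈ S then d i k (x i k) else ∑ j, interFlow d s R x i j k

/-- The right-hand side of the non-FIFO dynamics:
`ẋ_i^k = λ_i^k + Σ_j f_ji^k(x) − z_i^k(x)`. -/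
noncomputable def vectorField (S : Finset E) (d : E → K → ℝ → ℝ) (s : E → ℝ → ℝ)
    (R : K → Matrix E E ℝ) (lam : E → K → ℝ) (x : E → K → ℝ) (i : E) (k : K) : ℝ :=
  lam i k + (∑ j, interFlow d s R x j i k) - outFlow S d s R x i k

/-- The free-flow region `F ⊆ X = ℝ≥0^{E×K}`. -/
def FreeFlowRegion (Ron : Finset E) (d : E → K → ℝ → ℝ) (s : E → ℝ → ℝ)
    (R : K → Matrix E E ℝ) : Set (E → K → ℝ) :=
  {x | (∀ i k, 0 ≤ x i k) ∧
    ∀ i, i ∉ Ron → (∑ k, ∑ j, R k j i * d j k (x j k)) < s i (∑ k, x i k)}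

/-- The capacity region `C_i` of a non on-ramp cell, with demand functions `dI` and
supply function `sI`. -/
def capacityRegion (dI : K → ℝ → ℝ) (sI : ℝ → ℝ) : Set (K → ℝ) :=
  {ζ | (∀ k, 0 ≤ ζ k) ∧ ∃ ξ : K → ℝ, (∀ k, 0 ≤ ξ k) ∧ (∀ k, dI k (ξ k) = ζ k) ∧
    (∑ k, ζ k) < sI (∑ k, ξ k)}

/-- The transported inflow `((I − (R^k)ᵀ)⁻¹ λ^k)_i`. -/
noncomputable def transported (R : K → Matrix E E ℝ) (lam : E → K → ℝ)
    (i : E) (k : K) : ℝ :=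
  ((1 - (R k)ᵀ)⁻¹ *ᵥ fun j => lam j k) i

/-- The stability region `Λ`: nonnegative inflows supported on the on-ramps such that
the transported inflow vector lies in the capacity region of every non on-ramp cell. -/
def stabilityRegion (Ron : Finset E) (d : E → K → ℝ → ℝ) (s : E → ℝ → ℝ)
    (R : K → Matrix E E ℝ) : Set (E → K → ℝ) :=
  {lam | (∀ i k, 0 ≤ lam i k) ∧ (∀ i, i ∉ Ron → ∀ k, lam i k = 0) ∧
    ∀ i, i ∉ Ron → (fun k => transported R lam i k) ∈ capacityRegion (d i) (s i)}

end MTN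

/-- The `l1` distance of `x*` to the complement of the free-flow region inside the state
space `X = ℝ≥0^{E×K}` (as an extended nonnegative real, so it is `∞` when `X ⊆ F`):
`δ̄ = inf {‖x − x*‖₁ : x ∈ X \ F}`. -/
noncomputable def deltaBar {E K : Type*} [Fintype E] [Fintype K] [DecidableEq E]
    (Ron : Finset E) (d : E → K → ℝ → ℝ) (s : E → ℝ → ℝ) (R : K → Matrix E E ℝ)
    (xstar : E → K → ℝ) : ENNReal :=
  ⨅ x ∈ {x : E → K → ℝ | (∀ i k, 0 ≤ x i k) ∧ x ∉ FreeFlowRegion Ron d s R},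
    ENNReal.ofReal (∑ i, ∑ k, |x i k - xstar i k|)


open Set Filter Topology

set_option linter.unusedSectionVars false
set_option maxHeartbeats 1000000

/-- Right derivative of `|f|` from a right derivative of `f`. -/
lemma MTNaux.abs_hasDerivWithinAt_right {f : ℝ → ℝ} {f' t : ℝ}
    (hf : HasDerivWithinAt f f' (Ici t) t) :
    HasDerivWithinAt (fun z => |f z|)
      (if 0 < f t then f' else if f t < 0 then -f' else |f'|) (Ici t) t := by
  rcases lt_trichotomy (f t) 0 with h | h | h
  · rw [if_neg (by linarith), if_pos h]
    have hc : ContinuousWithinAt f (Ici t) t := hf.continuousWithinAt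
    have hev : ∀ᶠ z in 𝓝[Ici t] t, f z < 0 := hc (Iio_mem_nhds h)
    exact (hf.neg).congr_of_eventuallyEq
      (hev.mono fun z hz => abs_of_neg hz) (abs_of_neg h)
  · rw [if_neg (by rw [h]; exact lt_irrefl 0), if_neg (by rw [h]; exact lt_irrefl 0)]
    rw [hasDerivWithinAt_iff_tendsto_slope] at hf ⊢
    rw [Ici_sdiff_left] at hf ⊢
    have habs : Tendsto (fun z => |slope f t z|) (𝓝[>] t) (𝓝 |f'|) :=
      (continuous_abs.tendsto f').comp hf
    apply habs.congr'
    filter_upwards [self_mem_nhdsWithin] with z hz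
    have hzt : (0:ℝ) < z - t := sub_pos.2 hz
    rw [slope_def_field, slope_def_field, h, sub_zero, abs_div, abs_of_pos hzt]
    simp [abs_sub_comm, h]
  · rw [if_pos h]
    have hc : ContinuousWithinAt f (Ici t) t := hf.continuousWithinAt
    have hev : ∀ᶠ z in 𝓝[Ici t] t, 0 < f z := hc (Ioi_mem_nhds h)
    exact hf.congr_of_eventuallyEq
      (hev.mono fun z hz => abs_of_pos hz) (abs_of_pos h)

/-- the liminf slope condition needed by Gronwall, from a right derivative. -/
lemma MTNaux.liminf_slope {f : ℝ → ℝ} {f' t : ℝ}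
    (h : HasDerivWithinAt f f' (Ici t) t) :
    ∀ r, f' < r → ∃ᶠ z in 𝓝[>] t, (z - t)⁻¹ * (f z - f t) < r := by
  intro r hr
  rw [hasDerivWithinAt_iff_tendsto_slope, Ici_sdiff_left] at h
  have : ∀ᶠ z in 𝓝[>] t, slope f t z < r := h (Iio_mem_nhds hr)
  apply Eventually.frequently
  filter_upwards [this] with z hz
  rwa [slope_def_field, div_eq_inv_mul] at hz

/-- Core sign inequality for the Lyapunov derivative, for one commodity. -/
lemma MTNaux.core_ineq {ι : Type*} [Fintype ι] (A : Matrix ι ι ℝ)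
    (hA : ∀ i j, 0 ≤ A i j) (w y e : ι → ℝ) (hw : ∀ i, 0 ≤ w i)
    (hs₁ : ∀ i, 0 < e i → 0 < y i) (hs₂ : ∀ i, e i < 0 → y i < 0)
    (hs₀ : ∀ i, e i = 0 → y i = 0) :
    ∑ i, w i * (if 0 < e i then ((∑ j, A j i * y j) - y i)
      else if e i < 0 then -((∑ j, A j i * y j) - y i)
      else |(∑ j, A j i * y j) - y i|)
    ≤ ∑ j, ((∑ i, A j i * w i) - w j) * |y j| := by
  have key : ∀ i, (if 0 < e i then ((∑ j, A j i * y j) - y i)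
      else if e i < 0 then -((∑ j, A j i * y j) - y i)
      else |(∑ j, A j i * y j) - y i|) ≤ (∑ j, A j i * |y j|) - |y i| := by
    intro i
    have hAy : ∀ j, A j i * y j ≤ A j i * |y j| :=
      fun j => mul_le_mul_of_nonneg_left (le_abs_self _) (hA j i)
    have hAy' : ∀ j, -(A j i * y j) ≤ A j i * |y j| := by
      intro j
      have := mul_le_mul_of_nonneg_left (neg_abs_le (y j)) (hA j i)
      nlinarith [this]
    rcases lt_trichotomy (e i) 0 with h | h | h
    · rw [if_neg (by linarith), if_pos h]
      have hy := hs₂ i h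
      have hyi : |y i| = -y i := abs_of_neg hy
      have hsum : -(∑ j, A j i * y j) ≤ ∑ j, A j i * |y j| := by
        rw [← Finset.sum_neg_distrib]
        exact Finset.sum_le_sum fun j _ => hAy' j
      linarith
    · have hy := hs₀ i h
      rw [if_neg (by rw [h]; exact lt_irrefl 0), if_neg (by rw [h]; exact lt_irrefl 0),
        hy, sub_zero, abs_zero, sub_zero]
      calc |∑ j, A j i * y j| ≤ ∑ j, |A j i * y j| := Finset.abs_sum_le_sum_abs _ _
        _ = ∑ j, A j i * |y j| := by
          refine Finset.sum_congr rfl fun j _ => ?_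
          rw [abs_mul, abs_of_nonneg (hA j i)]
    · rw [if_pos h]
      have hy := hs₁ i h
      have hyi : |y i| = y i := abs_of_pos hy
      have hsum : (∑ j, A j i * y j) ≤ ∑ j, A j i * |y j| :=
        Finset.sum_le_sum fun j _ => hAy j
      linarith
  calc ∑ i, w i * _ ≤ ∑ i, w i * ((∑ j, A j i * |y j|) - |y i|) :=
        Finset.sum_le_sum fun i _ => mul_le_mul_of_nonneg_left (key i) (hw i)
  _ = ∑ j, ((∑ i, A j i * w i) - w j) * |y j| := by
      simp_rw [mul_sub, sub_mul, Finset.sum_sub_distrib, Finset.sum_mul, Finset.mul_sum]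
      rw [Finset.sum_comm]
      congr 1
      refine Finset.sum_congr rfl fun j _ => Finset.sum_congr rfl fun i _ => by ring

/-- Strict monotonicity of a demand function on `[0, ∞)`. -/
lemma MTNaux.strictMonoOn_demand {d : ℝ → ℝ}
    (hdiff : ∀ ξ : ℝ, 0 ≤ ξ → DifferentiableAt ℝ d ξ)
    (hpos : ∀ ξ : ℝ, 0 ≤ ξ → 0 < deriv d ξ) :
    StrictMonoOn d (Ici 0) := by
  refine strictMonoOn_of_deriv_pos (convex_Ici 0)
    (fun ξ hξ => (hdiff ξ hξ).continuousAt.continuousWithinAt) (fun ξ hξ => ?_)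
  rw [interior_Ici] at hξ
  exact hpos ξ (le_of_lt hξ)

/-- Quantitative lower bound for increments of a demand function on a compact interval. -/
lemma MTNaux.exists_slope_lower {d : ℝ → ℝ} {a M : ℝ}
    (hdiff : ∀ ξ : ℝ, 0 ≤ ξ → DifferentiableAt ℝ d ξ)
    (hpos : ∀ ξ : ℝ, 0 ≤ ξ → 0 < deriv d ξ)
    (ha : a ∈ Icc 0 M) :
    ∃ m > 0, ∀ ξ ∈ Icc (0:ℝ) M, m * |ξ - a| ≤ |d ξ - d a| := by
  have hmono := MTNaux.strictMonoOn_demand hdiff hpos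
  set g : ℝ → ℝ := fun ξ => if ξ = a then deriv d a else (d ξ - d a) / (ξ - a) with hg
  have hga : g a = deriv d a := by simp [hg]
  have hgne : ∀ ξ, ξ ≠ a → g ξ = (d ξ - d a) / (ξ - a) := fun ξ h => by simp [hg, h]
  -- continuity of g on Icc 0 M
  have hgc : ContinuousOn g (Icc 0 M) := by
    intro ξ hξ
    rcases eq_or_ne ξ a with rfl | hne
    · -- at a : slope tendsto deriv
      have hd : HasDerivAt d (deriv d ξ) ξ := (hdiff ξ hξ.1).hasDerivAt
      have hslope : Tendsto (slope d ξ) (𝓝[≠] ξ) (𝓝 (deriv d ξ)) :=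
        hasDerivAt_iff_tendsto_slope.1 hd
      have : Tendsto g (𝓝 ξ) (𝓝 (g ξ)) := by
        rw [← nhdsNE_sup_pure ξ, tendsto_sup]
        constructor
        · rw [hga]
          apply hslope.congr'
          filter_upwards [self_mem_nhdsWithin] with z hz
          rw [slope_def_field, hgne z hz]
        · simpa using tendsto_pure_nhds g ξ
      exact (ContinuousAt.continuousWithinAt this : _)
    · -- away from a
      have hopen : ∀ᶠ z in 𝓝 ξ, z ≠ a := isOpen_ne.eventually_mem hne
      have hcd : ContinuousAt d ξ := (hdiff ξ hξ.1).continuousAt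
      have hq : ContinuousAt (fun z => (d z - d a) / (z - a)) ξ := by
        apply ContinuousAt.div
        · exact (hcd.sub continuousAt_const)
        · exact (continuousAt_id.sub continuousAt_const)
        · exact sub_ne_zero.2 hne
      have : ContinuousAt g ξ := by
        apply hq.congr
        filter_upwards [hopen] with z hz
        rw [hgne z hz]
      exact this.continuousWithinAt
  -- positivity of g on Icc 0 M
  have hgpos : ∀ ξ ∈ Icc (0:ℝ) M, 0 < g ξ := by
    intro ξ hξ
    rcases eq_or_ne ξ a with rfl | hne
    · rw [hga]; exact hpos ξ hξ.1
    · rw [hgne ξ hne]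
      rcases lt_or_gt_of_ne hne with h | h
      · apply div_pos_of_neg_of_neg
        · exact sub_neg.2 (hmono hξ.1 ha.1 h)
        · exact sub_neg.2 h
      · apply div_pos
        · exact sub_pos.2 (hmono ha.1 hξ.1 h)
        · exact sub_pos.2 h
  obtain ⟨ξ₀, hξ₀, hmin⟩ := (isCompact_Icc (a := (0:ℝ)) (b := M)).exists_isMinOn
    (Set.nonempty_of_mem ha) hgc
  refine ⟨g ξ₀, hgpos ξ₀ hξ₀, fun ξ hξ => ?_⟩
  rcases eq_or_ne ξ a with rfl | hne
  · simp
  · have hkey : d ξ - d a = g ξ * (ξ - a) := by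
      rw [hgne ξ hne, div_mul_cancel₀]
      exact sub_ne_zero.2 hne
    rw [hkey, abs_mul, abs_of_pos (hgpos ξ hξ)]
    exact mul_le_mul_of_nonneg_right (hmin hξ) (abs_nonneg _)

/-- Abstract decay estimate via Grönwall. -/
lemma MTNaux.decay {V D : ℝ → ℝ} {Kc : ℝ}
    (hcont : ContinuousOn V (Ici 0))
    (hD : ∀ t, 0 ≤ t → HasDerivWithinAt V (D t) (Ici t) t)
    (hDb : ∀ t, 0 ≤ t → D t ≤ Kc * V t) :
    ∀ t, 0 ≤ t → V t ≤ V 0 * Real.exp (Kc * t) := by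
  intro T hT
  have h := le_gronwallBound_of_liminf_deriv_right_le (f := V) (f' := D)
    (δ := V 0) (K := Kc) (ε := 0) (a := 0) (b := T)
    (hcont.mono (Icc_subset_Ici_self))
    (fun t ht r hr => MTNaux.liminf_slope (hD t ht.1) r hr)
    le_rfl
    (fun t ht => by have := hDb t ht.1; linarith)
    T (right_mem_Icc.2 hT)
  rwa [sub_zero, gronwallBound_ε0] at h

/-- Abstract forward invariance of sublevel sets via Grönwall. -/
lemma MTNaux.inv {V D : ℝ → ℝ} {r : ℝ}
    (hcont : ContinuousOn V (Ici 0))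
    (hD : ∀ t, 0 ≤ t → HasDerivWithinAt V (D t) (Ici t) t)
    (hVr : V 0 < r)
    (hDb : ∀ t, 0 ≤ t → V t < r → D t ≤ 0) :
    ∀ t, 0 ≤ t → V t ≤ V 0 := by
  intro T hT
  have gron : ∀ τ, 0 ≤ τ → τ ≤ T → (∀ t ∈ Ico (0:ℝ) τ, V t < r) → V τ ≤ V 0 := by
    intro τ hτ0 _hτT hsmall
    have h := le_gronwallBound_of_liminf_deriv_right_le (f := V) (f' := D)
      (δ := V 0) (K := 0) (ε := 0) (a := 0) (b := τ)
      (hcont.mono (Icc_subset_Ici_self))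
      (fun t ht r' hr' => MTNaux.liminf_slope (hD t ht.1) r' hr')
      le_rfl
      (fun t ht => by
        have := hDb t ht.1 (hsmall t ht); simp only [zero_mul, add_zero]; linarith)
      τ (right_mem_Icc.2 hτ0)
    rw [gronwallBound_K0] at h
    simpa using h
  set Bad : Set ℝ := Icc 0 T ∩ V ⁻¹' (Ici r) with hBad
  rcases Set.eq_empty_or_nonempty Bad with hB | hB
  · refine gron T hT le_rfl (fun t ht => ?_)
    by_contra hc
    push_neg at hc
    have : t ∈ Bad := ⟨⟨ht.1, le_of_lt ht.2⟩, hc⟩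
    rw [hB] at this
    exact this
  · exfalso
    have hclosed : IsClosed Bad := by
      rw [hBad]
      exact ContinuousOn.preimage_isClosed_of_isClosed
        (hcont.mono (Icc_subset_Ici_self)) isClosed_Icc isClosed_Ici
    have hbdd : BddBelow Bad := ⟨0, fun t ht => ht.1.1⟩
    set τ := sInf Bad with hτ
    have hτmem : τ ∈ Bad := hclosed.csInf_mem hB hbdd
    have hτ0 : 0 ≤ τ := hτmem.1.1
    have hτT : τ ≤ T := hτmem.1.2
    have hτr : r ≤ V τ := hτmem.2
    have hlt : ∀ t ∈ Ico (0:ℝ) τ, V t < r := by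
      intro t ht
      by_contra hc
      push_neg at hc
      have htB : t ∈ Bad := ⟨⟨ht.1, le_trans (le_of_lt ht.2) hτT⟩, hc⟩
      have := csInf_le hbdd htB
      rw [← hτ] at this
      exact absurd (lt_of_lt_of_le ht.2 this) (lt_irrefl t)
    have := gron τ hτ0 hτT hlt
    linarith

section
variable {ι κ : Type*} [Fintype ι] [Fintype κ] [Nonempty ι] [Nonempty κ] [DecidableEq ι]

/-- Construction of strictly contracting weights from out-connectivity. -/
lemma MTNaux.exists_weights (A : κ → Matrix ι ι ℝ) (S : Finset ι)
    (hA : ∀ k i j, 0 ≤ A k i j)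
    (hrow : ∀ k i, ∑ j, A k i j ≤ 1)
    (hSrow : ∀ k i, i ∈ S → ∑ j, A k i j = 0)
    (hout : ∀ k i₀, ∃ (l : ℕ) (p : Fin (l+1) → ι), p 0 = i₀ ∧ p (Fin.last l) ∈ S ∧
      0 < ∏ h : Fin l, A k (p h.castSucc) (p h.succ)) :
    ∃ (w : κ → ι → ℝ) (γ : ℝ), 0 < γ ∧ γ < 1 ∧ (∀ k i, 1 ≤ w k i) ∧
      ∀ k j, (∑ i, A k j i * w k i) ≤ γ * w k j := by
  classical
  set T : κ → (ι → ℝ) → ι → ℝ := fun k v j => ∑ i, A k j i * v i with hT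
  set u : κ → ℕ → ι → ℝ := fun k n => (T k)^[n] (fun _ => 1) with hu
  have hu0 : ∀ k j, u k 0 j = 1 := fun k j => rfl
  have husucc : ∀ k n, u k (n+1) = T k (u k n) := by
    intro k n; rw [hu]; exact Function.iterate_succ_apply' (T k) n _
  have hnn : ∀ k n j, 0 ≤ u k n j := by
    intro k n
    induction n with
    | zero => intro j; rw [hu0]; norm_num
    | succ n ih =>
      intro j; rw [husucc]
      exact Finset.sum_nonneg fun i _ => mul_nonneg (hA k j i) (ih i)
  have hle1 : ∀ k n j, u k n j ≤ 1 := by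
    intro k n
    induction n with
    | zero => intro j; rw [hu0]
    | succ n ih =>
      intro j; rw [husucc]
      calc (∑ i, A k j i * u k n i) ≤ ∑ i, A k j i * 1 :=
            Finset.sum_le_sum fun i _ => mul_le_mul_of_nonneg_left (ih i) (hA k j i)
        _ = ∑ i, A k j i := by simp
        _ ≤ 1 := hrow k j
  have hTmono : ∀ k (v v' : ι → ℝ), (∀ i, v i ≤ v' i) → ∀ j, T k v j ≤ T k v' j := by
    intro k v v' hvv j
    exact Finset.sum_le_sum fun i _ => mul_le_mul_of_nonneg_left (hvv i) (hA k j i)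
  have hdec : ∀ k n j, u k (n+1) j ≤ u k n j := by
    intro k n
    induction n with
    | zero => intro j; rw [husucc]; exact hle1 k 1 j
    | succ n ih =>
      intro j
      rw [husucc k (n+1), husucc k n]
      refine hTmono k _ _ (fun i => ?_) j
      rw [← husucc k n]
      exact ih i
  have hanti : ∀ k j, Antitone (fun n => u k n j) :=
    fun k j => antitone_nat_of_succ_le (fun n => hdec k n j)
  -- path estimate
  have hpath : ∀ k (l : ℕ) (p : Fin (l+1) → ι), p (Fin.last l) ∈ S →
      u k (l+1) (p 0) ≤ 1 - ∏ h : Fin l, A k (p h.castSucc) (p h.succ) := by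
    intro k l
    induction l with
    | zero =>
      intro p hp
      have h0 : p 0 ∈ S := by simpa [Fin.last] using hp
      have : u k 1 (p 0) = ∑ i, A k (p 0) i := by
        rw [husucc]; simp [hT, hu0]
      rw [this, hSrow k _ h0]
      simp
    | succ l ih =>
      intro p hp
      set q : Fin (l+1) → ι := fun h => p h.succ with hq
      have hq0 : q 0 = p 1 := by simp [hq]
      have hqS : q (Fin.last l) ∈ S := by
        show p (Fin.last l).succ ∈ S
        rw [Fin.succ_last]
        exact hp
      have hIH := ih q hqS
      set π' : ℝ := ∏ h : Fin l, A k (q h.castSucc) (q h.succ) with hπ'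
      have hπnn : 0 ≤ π' := Finset.prod_nonneg fun h _ => hA k _ _
      have hstep : u k (l+2) (p 0) = ∑ i, A k (p 0) i * u k (l+1) i := by
        rw [husucc]
      have hbound : ∀ i, u k (l+1) i ≤ 1 - (if i = p 1 then π' else 0) := by
        intro i
        by_cases h : i = p 1
        · rw [if_pos h, h, ← hq0]; exact hIH
        · rw [if_neg h]; simpa using hle1 k (l+1) i
      have hsum : (∑ i, A k (p 0) i * u k (l+1) i)
          ≤ ∑ i, A k (p 0) i * (1 - (if i = p 1 then π' else 0)) :=
        Finset.sum_le_sum fun i _ => mul_le_mul_of_nonneg_left (hbound i) (hA k (p 0) i)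
      have hsplit : ∑ i, A k (p 0) i * (1 - (if i = p 1 then π' else 0))
          = (∑ i, A k (p 0) i) - A k (p 0) (p 1) * π' := by
        simp_rw [mul_sub, Finset.sum_sub_distrib, mul_one]
        congr 1
        rw [Finset.sum_congr rfl (fun i _ => by rw [mul_ite, mul_zero])]
        simp
      have hprod : (∏ h : Fin (l+1), A k (p h.castSucc) (p h.succ))
          = A k (p 0) (p 1) * π' := by
        rw [Fin.prod_univ_succ, hπ']
        have h0 : A k (p (0 : Fin (l+1)).castSucc) (p (0 : Fin (l+1)).succ)
            = A k (p 0) (p 1) := by norm_num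
        rw [h0]
        congr 1
      rw [hstep, hprod]
      calc (∑ i, A k (p 0) i * u k (l+1) i)
          ≤ (∑ i, A k (p 0) i) - A k (p 0) (p 1) * π' := le_of_le_of_eq hsum hsplit
        _ ≤ 1 - A k (p 0) (p 1) * π' := by
            have := hrow k (p 0); linarith
  -- for each (k,i) a power with u < 1
  have hdrop : ∀ k i, ∃ n : ℕ, u k (n+1) i < 1 := by
    intro k i
    obtain ⟨l, p, hp0, hpS, hπ⟩ := hout k i
    refine ⟨l, ?_⟩
    have := hpath k l p hpS
    rw [hp0] at this
    linarith
  choose ℓ hℓ using hdrop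
  set L : ℕ := 1 + Finset.univ.sup (fun p : κ × ι => ℓ p.1 p.2) with hL
  have hL1 : 1 ≤ L := Nat.le_add_right 1 _
  have hLge : ∀ k i, ℓ k i + 1 ≤ L := by
    intro k i
    have : ℓ k i ≤ Finset.univ.sup (fun p : κ × ι => ℓ p.1 p.2) :=
      Finset.le_sup (f := fun p : κ × ι => ℓ p.1 p.2) (Finset.mem_univ (k, i))
    omega
  have huL : ∀ k i, u k L i < 1 :=
    fun k i => lt_of_le_of_lt (hanti k i (hLge k i)) (hℓ k i)
  -- ρ
  have hne : (Finset.univ : Finset (κ × ι)).Nonempty := Finset.univ_nonempty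
  set ρ : ℝ := Finset.univ.sup' hne (fun p : κ × ι => u p.1 L p.2) with hρ
  have hρlt : ρ < 1 := by
    rw [hρ, Finset.sup'_lt_iff]
    exact fun p _ => huL p.1 p.2
  have hρge : ∀ k i, u k L i ≤ ρ := fun k i => by
    rw [hρ]; exact Finset.le_sup' (fun p : κ × ι => u p.1 L p.2) (Finset.mem_univ (k, i))
  have hρnn : 0 ≤ ρ := by
    have k₀ : κ := Classical.arbitrary κ
    have i₀ : ι := Classical.arbitrary ι
    exact le_trans (hnn k₀ L i₀) (hρge k₀ i₀)
  -- α
  obtain ⟨α, hα1, hαρ⟩ : ∃ α : ℝ, 1 < α ∧ α ^ L * ρ < 1 := by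
    have hcont : Tendsto (fun α : ℝ => α ^ L * ρ) (𝓝 1) (𝓝 ((1:ℝ) ^ L * ρ)) :=
      ((continuous_pow L).mul continuous_const).continuousAt
    rw [one_pow, one_mul] at hcont
    have hev : ∀ᶠ α in 𝓝 (1:ℝ), α ^ L * ρ < 1 := hcont.eventually (eventually_lt_nhds hρlt)
    have hev' : ∀ᶠ α in 𝓝[>] (1:ℝ), α ^ L * ρ < 1 :=
      eventually_nhdsWithin_of_eventually_nhds hev
    obtain ⟨α, hα⟩ := (hev'.and self_mem_nhdsWithin).exists
    exact ⟨α, hα.2, hα.1⟩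
  have hα0 : (0:ℝ) < α := by linarith
  have hαLpos : (0:ℝ) < α ^ L := pow_pos hα0 L
  set c₀ : ℝ := 1 - α ^ L * ρ with hc₀
  have hc₀pos : 0 < c₀ := by rw [hc₀]; linarith
  have hc₀le : c₀ ≤ 1 := by
    rw [hc₀]
    have : 0 ≤ α ^ L * ρ := mul_nonneg hαLpos.le hρnn
    linarith
  set B : ℝ := L * α ^ L with hB
  have hαL1 : 1 ≤ α ^ L := by
    have := pow_le_pow_right₀ hα1.le (Nat.zero_le L)
    rwa [pow_zero] at this
  have hB1 : 1 < B := by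
    rw [hB]
    have hαα : α ≤ α ^ L := by
      calc α = α ^ 1 := (pow_one α).symm
        _ ≤ α ^ L := pow_le_pow_right₀ hα1.le hL1
    have : (1:ℝ) ≤ (L:ℝ) := by exact_mod_cast hL1
    nlinarith
  set w : κ → ι → ℝ := fun k j => ∑ n ∈ Finset.range L, α ^ n * u k n j with hw
  have hw1 : ∀ k j, 1 ≤ w k j := by
    intro k j
    rw [hw]
    have h0mem : 0 ∈ Finset.range L := Finset.mem_range.2 hL1
    have : α ^ 0 * u k 0 j = 1 := by rw [hu0]; norm_num
    calc (1:ℝ) = α ^ 0 * u k 0 j := this.symm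
      _ ≤ ∑ n ∈ Finset.range L, α ^ n * u k n j :=
        Finset.single_le_sum (f := fun n => α ^ n * u k n j)
          (fun n _ => mul_nonneg (pow_pos hα0 n).le (hnn k n j)) h0mem
  have hwB : ∀ k j, w k j ≤ B := by
    intro k j
    rw [hw, hB]
    calc (∑ n ∈ Finset.range L, α ^ n * u k n j)
        ≤ ∑ n ∈ Finset.range L, α ^ L :=
          Finset.sum_le_sum (fun n hn => by
            have hn' : n ≤ L := (Finset.mem_range.1 hn).le
            calc α ^ n * u k n j ≤ α ^ n * 1 :=
                  mul_le_mul_of_nonneg_left (hle1 k n j) (pow_pos hα0 n).le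
              _ = α ^ n := mul_one _
              _ ≤ α ^ L := pow_le_pow_right₀ hα1.le hn')
      _ = L * α ^ L := by rw [Finset.sum_const, Finset.card_range, nsmul_eq_mul]
  set γ : ℝ := 1 - c₀ / B with hγ
  have hγpos : 0 < γ := by
    rw [hγ]
    have : c₀ / B < 1 := by
      rw [div_lt_one (by linarith)]
      linarith
    linarith
  have hγlt : γ < 1 := by
    rw [hγ]
    have : 0 < c₀ / B := div_pos hc₀pos (by linarith)
    linarith
  refine ⟨w, γ, hγpos, hγlt, hw1, fun k j => ?_⟩
  -- main contraction estimate
  have hTw : (∑ i, A k j i * w k i) = ∑ n ∈ Finset.range L, α ^ n * u k (n+1) j := by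
    rw [hw]
    simp_rw [Finset.mul_sum]
    rw [Finset.sum_comm]
    refine Finset.sum_congr rfl fun n _ => ?_
    rw [husucc]
    simp only [hT, Finset.mul_sum]
    refine Finset.sum_congr rfl fun i _ => by ring
  set Tv : ℝ := ∑ n ∈ Finset.range L, α ^ n * u k (n+1) j with hTv
  have hTvnn : 0 ≤ Tv :=
    Finset.sum_nonneg fun n _ => mul_nonneg (pow_pos hα0 n).le (hnn k _ j)
  have hαT : α * Tv = w k j - 1 + α ^ L * u k L j := by
    rw [hTv, hw, Finset.mul_sum]
    have hshift : ∀ n, α * (α ^ n * u k (n+1) j) = α ^ (n+1) * u k (n+1) j := by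
      intro n; rw [← mul_assoc, ← pow_succ']
    rw [Finset.sum_congr rfl fun n _ => hshift n]
    have := Finset.sum_range_succ' (fun m => α ^ m * u k m j) L
    have h2 := Finset.sum_range_succ (fun m => α ^ m * u k m j) L
    rw [h2] at this
    -- this : Σ_{range L} f + f L = Σ_{n ∈ range L} f (n+1) + f 0
    rw [hu0] at this
    simp only [pow_zero, mul_one, one_mul] at this
    linarith
  have hαT2 : α * Tv ≤ w k j - c₀ := by
    rw [hαT, hc₀]
    have : α ^ L * u k L j ≤ α ^ L * ρ :=
      mul_le_mul_of_nonneg_left (hρge k j) hαLpos.le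
    linarith
  have hTle : Tv ≤ w k j - c₀ := by
    have : Tv ≤ α * Tv := le_mul_of_one_le_left hTvnn hα1.le
    linarith
  have hfinal : w k j - c₀ ≤ γ * w k j := by
    rw [hγ, sub_mul, one_mul]
    have hBpos : (0:ℝ) < B := by linarith
    have : c₀ / B * w k j ≤ c₀ := by
      rw [div_mul_eq_mul_div, div_le_iff₀ hBpos]
      exact mul_le_mul_of_nonneg_left (hwB k j) hc₀pos.le
    linarith
  rw [hTw]
  linarith
end

section MTNlemmas
variable {E K : Type*} [Fintype E] [Fintype K] [DecidableEq E]

lemma MTNaux.flowScale_one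
    (Ron : Finset E) (d : E → K → ℝ → ℝ) (s : E → ℝ → ℝ) (R : K → Matrix E E ℝ)
    (hRnn : ∀ k i j, 0 ≤ R k i j) (hRRon : ∀ k i j, j ∈ Ron → R k i j = 0)
    (hdnn : ∀ i k, ∀ ξ : ℝ, 0 ≤ ξ → 0 ≤ d i k ξ)
    {x : E → K → ℝ} (hx : x ∈ FreeFlowRegion Ron d s R) (j : E) :
    flowScale d s R x j = 1 := by
  rw [flowScale]
  by_cases h : inflowDemand d R x j = 0
  · rw [if_pos h]
  · rw [if_neg h]
    have hjR : j ∉ Ron := by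
      intro hj
      apply h
      rw [inflowDemand]
      exact Finset.sum_eq_zero fun l _ => Finset.sum_eq_zero fun k _ => by
        rw [hRRon k l j hj, zero_mul]
    have hlt : inflowDemand d R x j < s j (∑ h, x j h) := by
      have h2 := hx.2 j hjR
      rw [inflowDemand, Finset.sum_comm]
      exact h2
    have hnn : 0 ≤ inflowDemand d R x j :=
      Finset.sum_nonneg fun l _ => Finset.sum_nonneg fun k _ =>
        mul_nonneg (hRnn k l j) (hdnn l k _ (hx.1 l k))
    have hpos : 0 < inflowDemand d R x j := lt_of_le_of_ne hnn (Ne.symm h)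
    have hge : (1:ℝ) ≤ s j (∑ h, x j h) / inflowDemand d R x j := by
      rw [le_div_iff₀ hpos, one_mul]
      exact hlt.le
    rw [min_eq_left hge]

lemma MTNaux.vf_eq
    (Ron S : Finset E) (d : E → K → ℝ → ℝ) (s : E → ℝ → ℝ) (R : K → Matrix E E ℝ)
    (lam : E → K → ℝ)
    (hRnn : ∀ k i j, 0 ≤ R k i j) (hRRon : ∀ k i j, j ∈ Ron → R k i j = 0)
    (hRrow1 : ∀ k i, i ∉ S → ∑ j, R k i j = 1)
    (hdnn : ∀ i k, ∀ ξ : ℝ, 0 ≤ ξ → 0 ≤ d i k ξ)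
    {x : E → K → ℝ} (hx : x ∈ FreeFlowRegion Ron d s R) (i : E) (k : K) :
    vectorField S d s R lam x i k
      = lam i k + (∑ j, R k j i * d j k (x j k)) - d i k (x i k) := by
  have hfs : ∀ j, flowScale d s R x j = 1 := fun j =>
    MTNaux.flowScale_one Ron d s R hRnn hRRon hdnn hx j
  rw [vectorField]
  have h1 : (∑ j, interFlow d s R x j i k) = ∑ j, R k j i * d j k (x j k) :=
    Finset.sum_congr rfl fun j _ => by rw [interFlow, hfs i, mul_one]
  have h2 : outFlow S d s R x i k = d i k (x i k) := by
    rw [outFlow]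
    by_cases hiS : i ∈ S
    · rw [if_pos hiS]
    · rw [if_neg hiS]
      have h3 : (∑ j, interFlow d s R x i j k) = ∑ j, R k i j * d i k (x i k) :=
        Finset.sum_congr rfl fun j _ => by rw [interFlow, hfs j, mul_one]
      rw [h3, ← Finset.sum_mul, hRrow1 k i hiS, one_mul]
  rw [h1, h2]

lemma MTNaux.exists_deltaF [Nonempty E] [Nonempty K]
    (Ron : Finset E) (d : E → K → ℝ → ℝ) (s : E → ℝ → ℝ) (R : K → Matrix E E ℝ)
    (hdDiff : ∀ i k, ∀ ξ : ℝ, 0 ≤ ξ → DifferentiableAt ℝ (d i k) ξ)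
    (hslip : ∀ i, i ∉ Ron → ∃ L : NNReal, LipschitzOnWith L (s i) (Set.Ici 0))
    (xstar : E → K → ℝ) (hxstarF : xstar ∈ FreeFlowRegion Ron d s R) :
    ∃ δF > (0:ℝ), ∀ x : E → K → ℝ, (∀ i k, 0 ≤ x i k) →
      (∑ i, ∑ k, |x i k - xstar i k|) < δF → x ∈ FreeFlowRegion Ron d s R := by
  classical
  set X : Set (E → K → ℝ) := {x | ∀ i k, 0 ≤ x i k} with hX
  have hxX : xstar ∈ X := hxstarF.1
  have hev : ∀ᶠ x in 𝓝[X] xstar, ∀ i, i ∉ Ron →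
      (∑ k, ∑ j, R k j i * d j k (x j k)) < s i (∑ k, x i k) := by
    rw [Filter.eventually_all]
    intro i
    by_cases hi : i ∈ Ron
    · exact Eventually.of_forall (fun x h => absurd hi h)
    · have hφ : ContinuousAt (fun x : E → K → ℝ => ∑ k, ∑ j, R k j i * d j k (x j k)) xstar := by
        refine tendsto_finset_sum _ fun k _ => tendsto_finset_sum _ fun j _ => ?_
        have heval : Tendsto (fun x : E → K → ℝ => x j k) (𝓝 xstar) (𝓝 (xstar j k)) :=
          (((continuous_apply k).comp (continuous_apply j)).tendsto xstar)
        have hd : ContinuousAt (d j k) (xstar j k) :=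
          (hdDiff j k _ (hxstarF.1 j k)).continuousAt
        exact (hd.tendsto.comp heval).const_mul _
      have hσ : ContinuousAt (fun x : E → K → ℝ => ∑ k, x i k) xstar :=
        tendsto_finset_sum _ fun k _ =>
          ((continuous_apply k).comp (continuous_apply i)).continuousAt
      obtain ⟨L, hL⟩ := hslip i hi
      have hmaps : MapsTo (fun x : E → K → ℝ => ∑ k, x i k) X (Ici 0) :=
        fun x hx => Finset.sum_nonneg fun k _ => hx i k
      have hψ : ContinuousWithinAt (fun x : E → K → ℝ => s i (∑ k, x i k)) X xstar :=
        ContinuousWithinAt.comp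
          (hL.continuousOn _ (hmaps hxX)) hσ.continuousWithinAt hmaps
      have hsub : ContinuousWithinAt
          (fun x : E → K → ℝ => s i (∑ k, x i k) - ∑ k, ∑ j, R k j i * d j k (x j k)) X xstar :=
        hψ.sub hφ.continuousWithinAt
      have hpos : (0:ℝ) < s i (∑ k, xstar i k) - ∑ k, ∑ j, R k j i * d j k (xstar j k) :=
        sub_pos.2 (hxstarF.2 i hi)
      have hmem := hsub (Ioi_mem_nhds hpos)
      filter_upwards [hmem] with x hx
      have hx' : (0:ℝ) < s i (∑ k, x i k) - ∑ k, ∑ j, R k j i * d j k (x j k) := hx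
      exact fun _ => by linarith
  obtain ⟨U, hUopen, hxU, hUsub⟩ := mem_nhdsWithin.1 hev
  obtain ⟨δ, hδpos, hball⟩ := Metric.isOpen_iff.1 hUopen xstar hxU
  refine ⟨δ, hδpos, fun x hxnn hsum => ?_⟩
  have hsum_nn : (0:ℝ) ≤ ∑ i, ∑ k, |x i k - xstar i k| :=
    Finset.sum_nonneg fun i _ => Finset.sum_nonneg fun k _ => abs_nonneg _
  have hdist : dist x xstar ≤ ∑ i, ∑ k, |x i k - xstar i k| := by
    rw [dist_pi_le_iff hsum_nn]
    intro i
    rw [dist_pi_le_iff hsum_nn]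
    intro k
    rw [Real.dist_eq]
    calc |x i k - xstar i k| ≤ ∑ k', |x i k' - xstar i k'| :=
          Finset.single_le_sum (f := fun k' => |x i k' - xstar i k'|)
            (fun k' _ => abs_nonneg _) (Finset.mem_univ k)
      _ ≤ ∑ i', ∑ k', |x i' k' - xstar i' k'| :=
          Finset.single_le_sum (f := fun i' => ∑ k', |x i' k' - xstar i' k'|)
            (fun i' _ => Finset.sum_nonneg fun k' _ => abs_nonneg _) (Finset.mem_univ i)
  have hxU' : x ∈ U := hball (by rw [Metric.mem_ball]; exact lt_of_le_of_lt hdist hsum)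
  exact ⟨hxnn, hUsub ⟨hxU', hxnn⟩⟩

end MTNlemmas

section Traj
variable {E K : Type*} [Fintype E] [Fintype K] [DecidableEq E]

lemma MTNaux.hasDeriv_V
    (S : Finset E) (d : E → K → ℝ → ℝ) (s : E → ℝ → ℝ) (R : K → Matrix E E ℝ)
    (lam : E → K → ℝ) (xstar : E → K → ℝ) (w : K → E → ℝ)
    {x : ℝ → E → K → ℝ}
    (hx1 : ∀ t : ℝ, 0 ≤ t →
      HasDerivWithinAt x (fun i k => vectorField S d s R lam (x t) i k) (Set.Ici 0) t)
    {t : ℝ} (ht : 0 ≤ t) :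
    HasDerivWithinAt (fun τ => ∑ i, ∑ k, w k i * |x τ i k - xstar i k|)
      (∑ i, ∑ k, w k i *
        (if 0 < x t i k - xstar i k then vectorField S d s R lam (x t) i k
         else if x t i k - xstar i k < 0 then -vectorField S d s R lam (x t) i k
         else |vectorField S d s R lam (x t) i k|)) (Set.Ici t) t := by
  have hx : HasDerivWithinAt x (fun i k => vectorField S d s R lam (x t) i k) (Set.Ici t) t :=
    (hx1 t ht).mono (Set.Ici_subset_Ici.2 ht)
  refine HasDerivWithinAt.fun_sum fun i _ => HasDerivWithinAt.fun_sum fun k _ => ?_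
  have hL : HasDerivWithinAt (fun τ => x τ i k)
      (vectorField S d s R lam (x t) i k) (Set.Ici t) t := by
    have hcomp := (((ContinuousLinearMap.proj (R := ℝ) (φ := fun _ : K => ℝ) k).comp
        (ContinuousLinearMap.proj (R := ℝ) (φ := fun _ : E => (K → ℝ)) i)).hasFDerivAt
        ).comp_hasDerivWithinAt t hx
    exact hcomp
  have hsub : HasDerivWithinAt (fun τ => x τ i k - xstar i k)
      (vectorField S d s R lam (x t) i k) (Set.Ici t) t := hL.sub_const _
  have habs := MTNaux.abs_hasDerivWithinAt_right hsub
  exact habs.const_mul (w k i)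

lemma MTNaux.cont_V
    (S : Finset E) (d : E → K → ℝ → ℝ) (s : E → ℝ → ℝ) (R : K → Matrix E E ℝ)
    (lam : E → K → ℝ) (xstar : E → K → ℝ) (w : K → E → ℝ)
    {x : ℝ → E → K → ℝ}
    (hx1 : ∀ t : ℝ, 0 ≤ t →
      HasDerivWithinAt x (fun i k => vectorField S d s R lam (x t) i k) (Set.Ici 0) t) :
    ContinuousOn (fun τ => ∑ i, ∑ k, w k i * |x τ i k - xstar i k|) (Set.Ici 0) := by
  have hc : ContinuousOn x (Set.Ici 0) := fun t ht => (hx1 t ht).continuousWithinAt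
  refine continuousOn_finset_sum _ fun i _ => continuousOn_finset_sum _ fun k _ => ?_
  have h1 : ContinuousOn (fun τ => x τ i k) (Set.Ici 0) := by
    have h2 := ((continuous_apply k).comp
      (continuous_apply (A := fun _ : E => K → ℝ) i)).comp_continuousOn hc
    exact h2
  exact continuousOn_const.mul ((h1.sub continuousOn_const).abs)

lemma MTNaux.D_bound
    (Ron S : Finset E) (d : E → K → ℝ → ℝ) (s : E → ℝ → ℝ) (R : K → Matrix E E ℝ)
    (lam : E → K → ℝ)
    (hRnn : ∀ k i j, 0 ≤ R k i j) (hRRon : ∀ k i j, j ∈ Ron → R k i j = 0)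
    (hRrow1 : ∀ k i, i ∉ S → ∑ j, R k i j = 1)
    (hdnn : ∀ i k, ∀ ξ : ℝ, 0 ≤ ξ → 0 ≤ d i k ξ)
    (hdDiff : ∀ i k, ∀ ξ : ℝ, 0 ≤ ξ → DifferentiableAt ℝ (d i k) ξ)
    (hdpos : ∀ i k, ∀ ξ : ℝ, 0 ≤ ξ → 0 < deriv (d i k) ξ)
    (xstar : E → K → ℝ) (hxstarF : xstar ∈ FreeFlowRegion Ron d s R)
    (hEq : ∀ i k, lam i k + (∑ j, R k j i * d j k (xstar j k)) - d i k (xstar i k) = 0)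
    (w : K → E → ℝ) (hw : ∀ k i, 0 ≤ w k i)
    {z : E → K → ℝ} (hz : z ∈ FreeFlowRegion Ron d s R) :
    (∑ i, ∑ k, w k i *
      (if 0 < z i k - xstar i k then vectorField S d s R lam z i k
       else if z i k - xstar i k < 0 then -vectorField S d s R lam z i k
       else |vectorField S d s R lam z i k|))
    ≤ ∑ k, ∑ j, ((∑ i, R k j i * w k i) - w k j)
        * |d j k (z j k) - d j k (xstar j k)| := by
  have hvf : ∀ i k, vectorField S d s R lam z i k
      = (∑ j, R k j i * (d j k (z j k) - d j k (xstar j k)))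
        - (d i k (z i k) - d i k (xstar i k)) := by
    intro i k
    rw [MTNaux.vf_eq Ron S d s R lam hRnn hRRon hRrow1 hdnn hz i k]
    have hsplit : (∑ j, R k j i * (d j k (z j k) - d j k (xstar j k)))
        = (∑ j, R k j i * d j k (z j k)) - ∑ j, R k j i * d j k (xstar j k) := by
      rw [← Finset.sum_sub_distrib]
      exact Finset.sum_congr rfl fun j _ => mul_sub _ _ _
    rw [hsplit]
    have h := hEq i k
    linarith
  rw [Finset.sum_comm]
  refine Finset.sum_le_sum fun k _ => ?_
  have hmono : ∀ j, StrictMonoOn (d j k) (Ici 0) :=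
    fun j => MTNaux.strictMonoOn_demand (hdDiff j k) (hdpos j k)
  have hcore := MTNaux.core_ineq (ι := E) (R k) (fun i j => hRnn k i j)
    (fun i => w k i) (fun j => d j k (z j k) - d j k (xstar j k))
    (fun i => z i k - xstar i k) (hw k)
    (fun i hi => sub_pos.2 (hmono i (hxstarF.1 i k) (hz.1 i k) (by linarith [sub_pos.1 hi])))
    (fun i hi => sub_neg.2 (hmono i (hz.1 i k) (hxstarF.1 i k) (by linarith [sub_neg.1 hi])))
    (fun i hi => by
      show d i k (z i k) - d i k (xstar i k) = 0
      rw [sub_eq_zero.1 hi, sub_self])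
  calc (∑ i, w k i *
      (if 0 < z i k - xstar i k then vectorField S d s R lam z i k
       else if z i k - xstar i k < 0 then -vectorField S d s R lam z i k
       else |vectorField S d s R lam z i k|))
      = ∑ i, w k i *
        (if 0 < z i k - xstar i k
          then ((∑ j, R k j i * (d j k (z j k) - d j k (xstar j k)))
            - (d i k (z i k) - d i k (xstar i k)))
         else if z i k - xstar i k < 0
          then -((∑ j, R k j i * (d j k (z j k) - d j k (xstar j k)))
            - (d i k (z i k) - d i k (xstar i k)))
         else |(∑ j, R k j i * (d j k (z j k) - d j k (xstar j k)))
            - (d i k (z i k) - d i k (xstar i k))|) := by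
        refine Finset.sum_congr rfl fun i _ => ?_
        rw [hvf i k]
    _ ≤ _ := hcore
end Traj

/-- main theorem: if the exogenous inflow lies in the stability region and
`x*` is the free-flow equilibrium point, then `δ̄ = inf{‖x − x*‖₁ : x ∈ X \ F} > 0`,
`x*` is (locally) asymptotically stable, and every solution of the non-FIFO dynamics
starting in the open `l1`-ball of radius `δ̄` around `x*` converges to `x*`. -/
theorem freeflow_equilibrium_asymptotically_stable
    {E K : Type*} [Fintype E] [Fintype K] [DecidableEq E] [Nonempty E] [Nonempty K]
    (Ron S : Finset E) (hRonNe : Ron.Nonempty) (hSNe : S.Nonempty) (hdisj : Disjoint Ron S)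
    (d : E → K → ℝ → ℝ) (s : E → ℝ → ℝ) (R : K → Matrix E E ℝ)
    (hd0 : ∀ i k, d i k 0 = 0)
    (hdDiff : ∀ i k, ∀ ξ : ℝ, 0 ≤ ξ → DifferentiableAt ℝ (d i k) ξ)
    (hdpos : ∀ i k, ∀ ξ : ℝ, 0 ≤ ξ → 0 < deriv (d i k) ξ)
    (hdnn : ∀ i k, ∀ ξ : ℝ, 0 ≤ ξ → 0 ≤ d i k ξ)
    (hslip : ∀ i, i ∉ Ron → ∃ L : NNReal, LipschitzOnWith L (s i) (Set.Ici 0))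
    (hsmono : ∀ i, i ∉ Ron → ∀ ξ η : ℝ, 0 ≤ η → η ≤ ξ → s i ξ ≤ s i η)
    (hs0 : ∀ i, i ∉ Ron → 0 < s i 0)
    (hsnn : ∀ i, i ∉ Ron → ∀ ξ : ℝ, 0 ≤ ξ → 0 ≤ s i ξ)
    (hRnn : ∀ k i j, 0 ≤ R k i j)
    (hRzero : ∀ k i j, j ∈ Ron ∨ i ∈ S → R k i j = 0)
    (hRrow1 : ∀ k i, i ∉ S → ∑ j, R k i j = 1)
    (hRrow0 : ∀ k i, i ∈ S → ∑ j, R k i j = 0)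
    (hRout : ∀ k (i₀ : E), ∃ (l : ℕ) (p : Fin (l + 1) → E), p 0 = i₀ ∧
      p (Fin.last l) ∈ S ∧ 0 < ∏ h : Fin l, R k (p h.castSucc) (p h.succ))
    (lam : E → K → ℝ) (hlamnn : ∀ i k, 0 ≤ lam i k)
    (hlamsupp : ∀ i, i ∉ Ron → ∀ k, lam i k = 0)
    (hlam : lam ∈ stabilityRegion Ron d s R)
    (xstar : E → K → ℝ)
    (hxstarF : xstar ∈ FreeFlowRegion Ron d s R)
    (hxstarEq : ∀ i k, vectorField S d s R lam xstar i k = 0) :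
    0 < deltaBar Ron d s R xstar ∧
    (∀ ε > (0 : ℝ), ∃ η > (0 : ℝ), ∀ x : ℝ → E → K → ℝ,
      ((∀ t : ℝ, 0 ≤ t →
          HasDerivWithinAt x (fun i k => vectorField S d s R lam (x t) i k)
            (Set.Ici 0) t) ∧
        (∀ t : ℝ, 0 ≤ t → ∀ i k, 0 ≤ x t i k)) →
      (∑ i, ∑ k, |x 0 i k - xstar i k|) < η →
      ∀ t : ℝ, 0 ≤ t → (∑ i, ∑ k, |x t i k - xstar i k|) < ε) ∧
    (∀ x : ℝ → E → K → ℝ,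
      ((∀ t : ℝ, 0 ≤ t →
          HasDerivWithinAt x (fun i k => vectorField S d s R lam (x t) i k)
            (Set.Ici 0) t) ∧
        (∀ t : ℝ, 0 ≤ t → ∀ i k, 0 ≤ x t i k)) →
      ENNReal.ofReal (∑ i, ∑ k, |x 0 i k - xstar i k|) < deltaBar Ron d s R xstar →
      Filter.Tendsto (fun t => x t) Filter.atTop (nhds xstar)) := by
  classical
  obtain ⟨δF, hδFpos, hδF⟩ := MTNaux.exists_deltaF Ron d s R hdDiff hslip xstar hxstarF
  have hRRon : ∀ k i j, j ∈ Ron → R k i j = 0 := fun k i j hj => hRzero k i j (Or.inl hj)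
  have hEq : ∀ i k, lam i k + (∑ j, R k j i * d j k (xstar j k)) - d i k (xstar i k) = 0 := by
    intro i k
    have h := hxstarEq i k
    rwa [MTNaux.vf_eq Ron S d s R lam hRnn hRRon hRrow1 hdnn hxstarF i k] at h
  -- conjunct 1
  have hdeltaBar : 0 < deltaBar Ron d s R xstar := by
    have hle : ENNReal.ofReal δF ≤ deltaBar Ron d s R xstar := by
      rw [deltaBar]
      refine le_iInf fun z => le_iInf fun hz => ENNReal.ofReal_le_ofReal ?_
      by_contra hc
      push_neg at hc
      exact hz.2 (hδF z hz.1 hc)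
    exact lt_of_lt_of_le (ENNReal.ofReal_pos.2 hδFpos) hle
  -- the key invariance property (unweighted l1 Lyapunov function)
  have key : ∀ x : ℝ → E → K → ℝ,
      ((∀ t : ℝ, 0 ≤ t →
          HasDerivWithinAt x (fun i k => vectorField S d s R lam (x t) i k)
            (Set.Ici 0) t) ∧
        (∀ t : ℝ, 0 ≤ t → ∀ i k, 0 ≤ x t i k)) →
      ∀ rr : ℝ, (∀ z : E → K → ℝ, (∀ i k, 0 ≤ z i k) →
        (∑ i, ∑ k, |z i k - xstar i k|) < rr → z ∈ FreeFlowRegion Ron d s R) →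
      (∑ i, ∑ k, |x 0 i k - xstar i k|) < rr →
      ∀ t, 0 ≤ t → (∑ i, ∑ k, |x t i k - xstar i k|)
        ≤ (∑ i, ∑ k, |x 0 i k - xstar i k|) := by
    intro x hx rr hrball h0
    have hVeq : ∀ τ : ℝ,
        (∑ i, ∑ k, (fun (_ : K) (_ : E) => (1:ℝ)) k i * |x τ i k - xstar i k|)
          = ∑ i, ∑ k, |x τ i k - xstar i k| := by
      intro τ
      exact Finset.sum_congr rfl fun i _ => Finset.sum_congr rfl fun k _ => one_mul _
    have hinv := MTNaux.inv
      (V := fun τ => ∑ i, ∑ k, (fun (_ : K) (_ : E) => (1:ℝ)) k i * |x τ i k - xstar i k|)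
      (D := fun t => ∑ i, ∑ k, (fun (_ : K) (_ : E) => (1:ℝ)) k i *
        (if 0 < x t i k - xstar i k then vectorField S d s R lam (x t) i k
         else if x t i k - xstar i k < 0 then -vectorField S d s R lam (x t) i k
         else |vectorField S d s R lam (x t) i k|))
      (r := rr)
      (MTNaux.cont_V S d s R lam xstar (fun _ _ => (1:ℝ)) hx.1)
      (fun t ht => MTNaux.hasDeriv_V S d s R lam xstar (fun _ _ => (1:ℝ)) hx.1 ht)
      (by beta_reduce; rw [hVeq 0]; exact h0)
      (fun t ht hVt => ?_)
    · intro t ht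
      have h := hinv t ht
      beta_reduce at h
      rwa [hVeq t, hVeq 0] at h
    · -- derivative bound when inside the free-flow region
      beta_reduce at hVt
      rw [hVeq t] at hVt
      have hzF : x t ∈ FreeFlowRegion Ron d s R := hrball (x t) (hx.2 t ht) hVt
      have hD := MTNaux.D_bound Ron S d s R lam hRnn hRRon hRrow1 hdnn hdDiff hdpos
        xstar hxstarF hEq (fun _ _ => (1:ℝ)) (fun _ _ => zero_le_one) hzF
      refine le_trans hD ?_
      refine Finset.sum_nonpos fun k _ => Finset.sum_nonpos fun j _ => ?_
      have hcoef : ((∑ i, R k j i * (fun (_ : K) (_ : E) => (1:ℝ)) k i)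
          - (fun (_ : K) (_ : E) => (1:ℝ)) k j) ≤ 0 := by
        simp only [mul_one]
        by_cases hjS : j ∈ S
        · rw [hRrow0 k j hjS]; norm_num
        · rw [hRrow1 k j hjS]; norm_num
      exact mul_nonpos_iff.2 (Or.inr ⟨hcoef, abs_nonneg _⟩)
  refine ⟨hdeltaBar, ?_, ?_⟩
  · -- stability
    intro ε hε
    refine ⟨min ε δF, lt_min hε hδFpos, fun x hx h0 t ht => ?_⟩
    have h0' : (∑ i, ∑ k, |x 0 i k - xstar i k|) < δF :=
      lt_of_lt_of_le h0 (min_le_right _ _)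
    calc (∑ i, ∑ k, |x t i k - xstar i k|)
        ≤ (∑ i, ∑ k, |x 0 i k - xstar i k|) := key x hx δF hδF h0' t ht
      _ < min ε δF := h0
      _ ≤ ε := min_le_left _ _
  · -- convergence
    intro x hx hdist
    have hV0nn : 0 ≤ ∑ i, ∑ k, |x 0 i k - xstar i k| :=
      Finset.sum_nonneg fun i _ => Finset.sum_nonneg fun k _ => abs_nonneg _
    obtain ⟨r, hr0, h1, h2⟩ := ENNReal.lt_iff_exists_real_btwn.1 hdist
    have hV0r : (∑ i, ∑ k, |x 0 i k - xstar i k|) < r := by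
      rwa [ENNReal.ofReal_lt_ofReal_iff_of_nonneg hV0nn] at h1
    have hrball : ∀ z : E → K → ℝ, (∀ i k, 0 ≤ z i k) →
        (∑ i, ∑ k, |z i k - xstar i k|) < r → z ∈ FreeFlowRegion Ron d s R := by
      intro z hznn hzr
      by_contra hzF
      have hle : deltaBar Ron d s R xstar
          ≤ ENNReal.ofReal (∑ i, ∑ k, |z i k - xstar i k|) := by
        rw [deltaBar]
        exact iInf₂_le z ⟨hznn, hzF⟩
      have hlt : ENNReal.ofReal (∑ i, ∑ k, |z i k - xstar i k|) < ENNReal.ofReal r := by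
        rw [ENNReal.ofReal_lt_ofReal_iff_of_nonneg
          (Finset.sum_nonneg fun i _ => Finset.sum_nonneg fun k _ => abs_nonneg _)]
        exact hzr
      exact absurd (lt_trans (lt_of_le_of_lt hle hlt) h2) (lt_irrefl _)
    have hinv := key x hx r hrball hV0r
    have hFall : ∀ t, 0 ≤ t → x t ∈ FreeFlowRegion Ron d s R :=
      fun t ht => hrball (x t) (hx.2 t ht) (lt_of_le_of_lt (hinv t ht) hV0r)
    -- contracting weights
    have hrowle : ∀ k i, ∑ j, R k i j ≤ 1 := by
      intro k i
      by_cases hiS : i ∈ S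
      · rw [hRrow0 k i hiS]; norm_num
      · rw [hRrow1 k i hiS]
    obtain ⟨w, γ, hγpos, hγlt, hwge1, hcontr⟩ :=
      MTNaux.exists_weights R S hRnn hrowle (fun k i hi => hRrow0 k i hi) hRout
    have hwnn : ∀ k i, 0 ≤ w k i := fun k i => le_trans zero_le_one (hwge1 k i)
    -- the quantitative slope lower bounds
    have hmex : ∀ p : E × K, ∃ m > (0:ℝ),
        ∀ ξ ∈ Set.Icc (0:ℝ) (xstar p.1 p.2 + ∑ i, ∑ k, |x 0 i k - xstar i k|),
        m * |ξ - xstar p.1 p.2| ≤ |d p.1 p.2 ξ - d p.1 p.2 (xstar p.1 p.2)| := by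
      intro p
      exact MTNaux.exists_slope_lower (hdDiff p.1 p.2) (hdpos p.1 p.2)
        ⟨hxstarF.1 p.1 p.2, by linarith⟩
    choose mf hmfpos hmf using hmex
    have hEKne : (Finset.univ : Finset (E × K)).Nonempty := Finset.univ_nonempty
    set m : ℝ := Finset.univ.inf' hEKne mf with hm
    have hmpos : 0 < m := by
      rw [hm, Finset.lt_inf'_iff]
      exact fun p _ => hmfpos p
    have hmle : ∀ p : E × K, m ≤ mf p :=
      fun p => Finset.inf'_le _ (Finset.mem_univ p)
    set Kc : ℝ := (γ - 1) * m with hKc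
    have hKcneg : Kc < 0 := mul_neg_of_neg_of_pos (by linarith) hmpos
    -- per-component a priori bounds
    have hcomp : ∀ t, 0 ≤ t → ∀ j k, |x t j k - xstar j k|
        ≤ ∑ i, ∑ k', |x 0 i k' - xstar i k'| := by
      intro t ht j k
      calc |x t j k - xstar j k| ≤ ∑ k', |x t j k' - xstar j k'| :=
            Finset.single_le_sum (f := fun k' => |x t j k' - xstar j k'|)
              (fun k' _ => abs_nonneg _) (Finset.mem_univ k)
        _ ≤ ∑ i, ∑ k', |x t i k' - xstar i k'| :=
            Finset.single_le_sum (f := fun i => ∑ k', |x t i k' - xstar i k'|)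
              (fun i _ => Finset.sum_nonneg fun k' _ => abs_nonneg _) (Finset.mem_univ j)
        _ ≤ ∑ i, ∑ k', |x 0 i k' - xstar i k'| := hinv t ht
    -- exponential decay of the weighted Lyapunov function
    have hdecay := MTNaux.decay
      (V := fun τ => ∑ i, ∑ k, w k i * |x τ i k - xstar i k|)
      (D := fun t => ∑ i, ∑ k, w k i *
        (if 0 < x t i k - xstar i k then vectorField S d s R lam (x t) i k
         else if x t i k - xstar i k < 0 then -vectorField S d s R lam (x t) i k
         else |vectorField S d s R lam (x t) i k|))
      (Kc := Kc)
      (MTNaux.cont_V S d s R lam xstar w hx.1)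
      (fun t ht => MTNaux.hasDeriv_V S d s R lam xstar w hx.1 ht)
      (fun t ht => ?_)
    · -- conclude convergence
      rw [tendsto_pi_nhds]
      intro i
      rw [tendsto_pi_nhds]
      intro k
      rw [tendsto_iff_dist_tendsto_zero]
      have hexp : Tendsto
          (fun t : ℝ => (∑ i', ∑ k', w k' i' * |x 0 i' k' - xstar i' k'|) * Real.exp (Kc * t))
          atTop (𝓝 0) := by
        have h1 : Tendsto (fun t : ℝ => Kc * t) atTop atBot :=
          Tendsto.const_mul_atTop_of_neg hKcneg tendsto_id
        have h2 := Real.tendsto_exp_atBot.comp h1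
        have h3 := h2.const_mul (∑ i', ∑ k', w k' i' * |x 0 i' k' - xstar i' k'|)
        simpa using h3
      refine squeeze_zero' (Eventually.of_forall fun t => dist_nonneg) ?_ hexp
      filter_upwards [eventually_ge_atTop (0:ℝ)] with t ht
      have hb1 : dist (x t i k) (xstar i k) ≤ w k i * |x t i k - xstar i k| := by
        rw [Real.dist_eq]
        exact le_mul_of_one_le_left (abs_nonneg _) (hwge1 k i)
      have hb2 : w k i * |x t i k - xstar i k|
          ≤ ∑ i', ∑ k', w k' i' * |x t i' k' - xstar i' k'| := by
        calc w k i * |x t i k - xstar i k|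
            ≤ ∑ k', w k' i * |x t i k' - xstar i k'| :=
              Finset.single_le_sum (f := fun k' => w k' i * |x t i k' - xstar i k'|)
                (fun k' _ => mul_nonneg (hwnn k' i) (abs_nonneg _)) (Finset.mem_univ k)
          _ ≤ ∑ i', ∑ k', w k' i' * |x t i' k' - xstar i' k'| :=
              Finset.single_le_sum (f := fun i' => ∑ k', w k' i' * |x t i' k' - xstar i' k'|)
                (fun i' _ => Finset.sum_nonneg fun k' _ =>
                  mul_nonneg (hwnn k' i') (abs_nonneg _)) (Finset.mem_univ i)
      exact le_trans hb1 (le_trans hb2 (hdecay t ht))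
    · -- the decay bound on the derivative
      have hzF := hFall t ht
      have hD := MTNaux.D_bound Ron S d s R lam hRnn hRRon hRrow1 hdnn hdDiff hdpos
        xstar hxstarF hEq w hwnn hzF
      refine le_trans hD ?_
      have hstep : ∀ k j, ((∑ i, R k j i * w k i) - w k j)
          * |d j k (x t j k) - d j k (xstar j k)|
          ≤ (γ - 1) * (w k j * (m * |x t j k - xstar j k|)) := by
        intro k j
        have hcoef : (∑ i, R k j i * w k i) - w k j ≤ (γ - 1) * w k j := by
          have h := hcontr k j
          have h' : (γ - 1) * w k j = γ * w k j - w k j := by ring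
          linarith
        have hcoefneg : (γ - 1) * w k j ≤ 0 :=
          mul_nonpos_iff.2 (Or.inr ⟨by linarith, hwnn k j⟩)
        have hXub : x t j k ∈ Set.Icc (0:ℝ)
            (xstar j k + ∑ i, ∑ k', |x 0 i k' - xstar i k'|) := by
          refine ⟨hx.2 t ht j k, ?_⟩
          have := hcomp t ht j k
          have h2 := le_abs_self (x t j k - xstar j k)
          linarith
        have hyge : m * |x t j k - xstar j k|
            ≤ |d j k (x t j k) - d j k (xstar j k)| := by
          calc m * |x t j k - xstar j k|
              ≤ mf (j, k) * |x t j k - xstar j k| :=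
                mul_le_mul_of_nonneg_right (hmle (j, k)) (abs_nonneg _)
            _ ≤ |d j k (x t j k) - d j k (xstar j k)| := hmf (j, k) _ hXub
        calc ((∑ i, R k j i * w k i) - w k j) * |d j k (x t j k) - d j k (xstar j k)|
            ≤ ((γ - 1) * w k j) * |d j k (x t j k) - d j k (xstar j k)| :=
              mul_le_mul_of_nonneg_right hcoef (abs_nonneg _)
          _ ≤ ((γ - 1) * w k j) * (m * |x t j k - xstar j k|) :=
              mul_le_mul_of_nonpos_left hyge hcoefneg
          _ = (γ - 1) * (w k j * (m * |x t j k - xstar j k|)) := by ring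
      calc (∑ k, ∑ j, ((∑ i, R k j i * w k i) - w k j)
            * |d j k (x t j k) - d j k (xstar j k)|)
          ≤ ∑ k, ∑ j, (γ - 1) * (w k j * (m * |x t j k - xstar j k|)) :=
            Finset.sum_le_sum fun k _ => Finset.sum_le_sum fun j _ => hstep k j
        _ = Kc * ∑ k, ∑ j, w k j * |x t j k - xstar j k| := by
            rw [Finset.mul_sum]
            refine Finset.sum_congr rfl fun k _ => ?_
            rw [Finset.mul_sum]
            exact Finset.sum_congr rfl fun j _ => by rw [hKc]; ring
        _ = Kc * ∑ i, ∑ k, w k i * |x t i k - xstar i k| := by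
            rw [Finset.sum_comm]
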